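/- Let t₀ > 0 be defined by the equation cosh(t₀) = t₀·sinh(t₀). Then t₀ exists, is unique, and the function g(t) = t²/(t² + cosh²(t)) on (0,∞) attains its maximum exactly at t = t₀. -/

import Mathlib

open Real Set

private noncomputable def ff (t : ℝ) : ℝ := t * Real.sinh t - Real.cosh t

private lemma ff_hasDeriv (t : ℝ) : HasDerivAt ff (t * Real.cosh t) t := by
  have h1 : HasDerivAt (fun t : ℝ => t * Real.sinh t)
      (1 * Real.sinh t + t * Real.cosh t) t :=
    (hasDerivAt_id t).mul (Real.hasDerivAt_sinh t)
  have h2 := h1.sub (Real.hasDerivAt_cosh t)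
  have : 1 * Real.sinh t + t * Real.cosh t - Real.sinh t = t * Real.cosh t := by ring
  rw [this] at h2
  exact h2

private lemma ff_strictMono : StrictMonoOn ff (Ici 0) := by
  apply strictMonoOn_of_deriv_pos (convex_Ici 0)
  · exact ((continuous_id.mul Real.continuous_sinh).sub Real.continuous_cosh).continuousOn
  · intro x hx
    rw [interior_Ici] at hx
    rw [(ff_hasDeriv x).deriv]
    exact mul_pos hx (Real.cosh_pos x)

private lemma hh_hasDeriv {t : ℝ} (ht : t ≠ 0) :
    HasDerivAt (fun t => Real.cosh t / t) (ff t / t ^ 2) t := by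
  have h := (Real.hasDerivAt_cosh t).div (hasDerivAt_id t) ht
  have e : ff t / t ^ 2 = (Real.sinh t * id t - Real.cosh t * 1) / id t ^ 2 := by
    unfold ff
    simp only [id]
    ring
  rw [e]
  exact h

private lemma hh_min {t₀ : ℝ} (ht₀ : 0 < t₀) (h0 : ff t₀ = 0) :
    ∀ t : ℝ, 0 < t → t ≠ t₀ → Real.cosh t₀ / t₀ < Real.cosh t / t := by
  have hcont : ∀ s : Set ℝ, (∀ x ∈ s, x ≠ 0) →
      ContinuousOn (fun t => Real.cosh t / t) s := fun s hs =>
    Real.continuous_cosh.continuousOn.div continuousOn_id hs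
  intro t ht hne
  rcases lt_or_gt_of_ne hne with hlt | hgt
  · have hanti : StrictAntiOn (fun t => Real.cosh t / t) (Ioc 0 t₀) := by
      apply strictAntiOn_of_deriv_neg (convex_Ioc 0 t₀)
      · exact hcont _ (fun x hx => ne_of_gt hx.1)
      · intro x hx
        rw [interior_Ioc] at hx
        rw [(hh_hasDeriv (ne_of_gt hx.1)).deriv]
        apply div_neg_of_neg_of_pos
        · have := ff_strictMono (le_of_lt hx.1) (le_of_lt ht₀) hx.2
          linarith [h0]
        · exact pow_pos hx.1 2
    exact hanti ⟨ht, le_of_lt hlt⟩ ⟨ht₀, le_refl _⟩ hlt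
  · have hmono : StrictMonoOn (fun t => Real.cosh t / t) (Ici t₀) := by
      apply strictMonoOn_of_deriv_pos (convex_Ici t₀)
      · exact hcont _ (fun x hx => ne_of_gt (lt_of_lt_of_le ht₀ hx))
      · intro x hx
        rw [interior_Ici] at hx
        rw [(hh_hasDeriv (ne_of_gt (lt_trans ht₀ hx))).deriv]
        apply div_pos
        · have := ff_strictMono (le_of_lt ht₀) (le_of_lt (lt_trans ht₀ hx)) hx
          linarith [h0]
        · exact pow_pos (lt_trans ht₀ hx) 2
    exact hmono (show t₀ ∈ Ici t₀ from le_refl t₀) (show t ∈ Ici t₀ from le_of_lt hgt) hgt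

private lemma ff_root_exists : ∃ c : ℝ, 0 < c ∧ ff c = 0 := by
  have hcont : ContinuousOn ff (Icc 0 2) :=
    ((continuous_id.mul Real.continuous_sinh).sub Real.continuous_cosh).continuousOn
  have h02 : (0:ℝ) ≤ 2 := by norm_num
  have hivt := intermediate_value_Icc h02 hcont
  have hf0 : ff 0 = -1 := by simp [ff]
  have hf2 : 0 < ff 2 := by
    unfold ff
    rw [Real.sinh_eq, Real.cosh_eq]
    have he : (3:ℝ) < Real.exp 2 := by
      have := Real.add_one_lt_exp (by norm_num : (2:ℝ) ≠ 0)
      linarith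
    have he' : Real.exp (-2) < 1/3 := by
      rw [Real.exp_neg]
      rw [inv_lt_comm₀ (Real.exp_pos 2) (by norm_num)]
      linarith
    nlinarith [Real.exp_pos (2:ℝ), Real.exp_pos (-2:ℝ)]
  have hmem : (0:ℝ) ∈ Icc (ff 0) (ff 2) := ⟨by rw [hf0]; norm_num, le_of_lt hf2⟩
  obtain ⟨c, hc, hfc⟩ := hivt hmem
  refine ⟨c, ?_, hfc⟩
  rcases eq_or_lt_of_le hc.1 with h | h
  · exfalso; rw [← h] at hfc; rw [hf0] at hfc; norm_num at hfc
  · exact h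

theorem stmt3 :
    (∃! t₀ : ℝ, 0 < t₀ ∧ Real.cosh t₀ = t₀ * Real.sinh t₀) ∧
      ∀ t₀ : ℝ, 0 < t₀ → Real.cosh t₀ = t₀ * Real.sinh t₀ →
        (∀ t : ℝ, 0 < t →
            t ^ 2 / (t ^ 2 + Real.cosh t ^ 2) ≤ t₀ ^ 2 / (t₀ ^ 2 + Real.cosh t₀ ^ 2)) ∧
          ∀ t : ℝ, 0 < t →
            t ^ 2 / (t ^ 2 + Real.cosh t ^ 2) = t₀ ^ 2 / (t₀ ^ 2 + Real.cosh t₀ ^ 2) →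
              t = t₀ := by
  have key : ∀ t₀ : ℝ, 0 < t₀ → Real.cosh t₀ = t₀ * Real.sinh t₀ →
      ∀ t : ℝ, 0 < t → t ≠ t₀ →
      t ^ 2 / (t ^ 2 + Real.cosh t ^ 2) < t₀ ^ 2 / (t₀ ^ 2 + Real.cosh t₀ ^ 2) := by
    intro t₀ ht₀ heq t ht hne
    have h0 : ff t₀ = 0 := by unfold ff; linarith
    have hh := hh_min ht₀ h0 t ht hne
    have hmul : Real.cosh t₀ * t < Real.cosh t * t₀ :=
      (div_lt_div_iff₀ ht₀ ht).mp hh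
    have hct : 0 < Real.cosh t := Real.cosh_pos t
    have hct₀ : 0 < Real.cosh t₀ := Real.cosh_pos t₀
    rw [div_lt_div_iff₀ (by positivity) (by positivity)]
    nlinarith [mul_pos hct₀ ht, mul_pos hct ht₀, sq_nonneg t, sq_nonneg t₀]
  constructor
  · obtain ⟨c, hc, hfc⟩ := ff_root_exists
    refine ⟨c, ⟨hc, by unfold ff at hfc; linarith⟩, ?_⟩
    rintro y ⟨hy, hyeq⟩
    have hfy : ff y = 0 := by unfold ff; linarith
    exact ff_strictMono.injOn (le_of_lt hy) (le_of_lt hc) (by rw [hfy, hfc])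
  · intro t₀ ht₀ heq
    constructor
    · intro t ht
      rcases eq_or_ne t t₀ with rfl | hne
      · exact le_refl _
      · exact le_of_lt (key t₀ ht₀ heq t ht hne)
    · intro t ht heq2
      by_contra hne
      exact absurd heq2 (ne_of_lt (key t₀ ht₀ heq t ht hne))
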